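/- Let a₁,…,a_N be pairwise distinct positive reals and suppose γ₁,…,γ_N ∈ ℝ satisfy ∑_{k=1}^N γ_k sin²(a_k x) = 0 for all x in some interval (0, ε) with ε > 0. Then γ₁ = ⋯ = γ_N = 0. -/

import Mathlib

open Set Polynomial Finset

-- Vandermonde-type helper
lemma vand_aux {N : ℕ} (c δ : Fin N → ℝ)
    (h : ∀ m : ℕ, ∑ k, δ k * c k ^ (m + 1) = 0) (P : ℝ[X]) :
    ∑ k, δ k * c k * P.eval (c k) = 0 := by
  have : ∀ k : Fin N, δ k * c k * P.eval (c k)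
      = ∑ m ∈ Finset.range (P.natDegree + 1), P.coeff m * (δ k * c k ^ (m + 1)) := by
    intro k
    rw [Polynomial.eval_eq_sum_range, Finset.mul_sum]
    congr 1; ext m; ring
  simp_rw [this]
  rw [Finset.sum_comm]
  simp_rw [← Finset.mul_sum, h, mul_zero, Finset.sum_const_zero]

lemma vand {N : ℕ} (c δ : Fin N → ℝ) (hc : Function.Injective c)
    (h : ∀ m : ℕ, ∑ k, δ k * c k ^ (m + 1) = 0) (j : Fin N) :
    δ j * c j = 0 := by
  have key := vand_aux c δ h (∏ i ∈ Finset.univ.erase j, (X - C (c i)))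
  have heval : ∀ k : Fin N, (∏ i ∈ Finset.univ.erase j, (X - C (c i))).eval (c k)
      = ∏ i ∈ Finset.univ.erase j, (c k - c i) := by
    intro k; simp [Polynomial.eval_prod]
  rw [Finset.sum_eq_single j] at key
  · have hne : ∏ i ∈ Finset.univ.erase j, (c j - c i) ≠ 0 := by
      apply Finset.prod_ne_zero_iff.mpr
      intro i hi
      have : i ≠ j := Finset.ne_of_mem_erase hi
      exact sub_ne_zero.mpr fun he => this (hc he.symm)
    rw [heval] at key
    exact (mul_eq_zero.mp key).resolve_right hne
  · intro k _ hkj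
    rw [heval]
    have : (c k - c k) = 0 := sub_self _
    rw [Finset.prod_eq_zero (Finset.mem_erase.mpr ⟨hkj, Finset.mem_univ k⟩) this]
    ring
  · intro h; exact absurd (Finset.mem_univ j) h

theorem sin_sq_dilates_vanishing_coeffs_zero
    (N : ℕ) (a : Fin N → ℝ)
    (ha_pos : ∀ k, 0 < a k) (ha_inj : Function.Injective a)
    (γ : Fin N → ℝ) (ε : ℝ) (hε : 0 < ε)
    (hvan : ∀ x ∈ Ioo (0 : ℝ) ε, ∑ k, γ k * Real.sin (a k * x) ^ 2 = 0) :
    ∀ k, γ k = 0 := by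
  set b : Fin N → ℝ := fun k => 2 * a k with hb
  -- Step A : cos sum is constant on the interval
  have hA : ∀ x ∈ Ioo (0 : ℝ) ε, ∑ k, γ k * Real.cos (b k * x) = ∑ k, γ k := by
    intro x hx
    have := hvan x hx
    have h2 : ∀ k : Fin N, γ k * Real.sin (a k * x) ^ 2
        = γ k / 2 - γ k / 2 * Real.cos (b k * x) := by
      intro k
      rw [Real.sin_sq_eq_half_sub]
      simp only [hb]; ring_nf
    rw [Finset.sum_congr rfl (fun k _ => h2 k), Finset.sum_sub_distrib] at this
    have : ∑ k, γ k / 2 * Real.cos (b k * x) = ∑ k, γ k / 2 := by linarith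
    calc ∑ k, γ k * Real.cos (b k * x) = 2 * ∑ k, γ k / 2 * Real.cos (b k * x) := by
          rw [Finset.mul_sum]; congr 1; ext k; ring
      _ = 2 * ∑ k, γ k / 2 := by rw [this]
      _ = ∑ k, γ k := by rw [Finset.mul_sum]; congr 1; ext k; ring
  -- derivative machinery
  have hderiv_cos : ∀ (r : ℝ) (k : Fin N) (x : ℝ),
      HasDerivAt (fun y => r * Real.cos (b k * y)) (-(r * b k) * Real.sin (b k * x)) x := by
    intro r k x
    have h1 : HasDerivAt (fun y : ℝ => b k * y) (b k) x := by
      simpa using (hasDerivAt_id x).const_mul (b k)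
    have := (Real.hasDerivAt_cos (b k * x)).comp x h1
    have := this.const_mul r
    rw [show -(r * b k) * Real.sin (b k * x) = r * (-Real.sin (b k * x) * b k) by ring]; exact this
  have hderiv_sin : ∀ (r : ℝ) (k : Fin N) (x : ℝ),
      HasDerivAt (fun y => r * Real.sin (b k * y)) ((r * b k) * Real.cos (b k * x)) x := by
    intro r k x
    have h1 : HasDerivAt (fun y : ℝ => b k * y) (b k) x := by
      simpa using (hasDerivAt_id x).const_mul (b k)
    have := (Real.hasDerivAt_sin (b k * x)).comp x h1
    have := this.const_mul r
    rw [show (r * b k) * Real.cos (b k * x) = r * (Real.cos (b k * x) * b k) by ring]; exact this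
  have hopen : IsOpen (Ioo (0:ℝ) ε) := isOpen_Ioo
  -- If a function (sum form) is constant on Ioo, its derivative sum vanishes on Ioo
  -- Step B: induction
  have hB : ∀ m : ℕ, (∀ x ∈ Ioo (0:ℝ) ε,
        ∑ k, γ k * (b k) ^ (2*m) * Real.cos (b k * x)
          = if m = 0 then ∑ k, γ k else 0)
      ∧ (∀ x ∈ Ioo (0:ℝ) ε, ∑ k, γ k * (b k) ^ (2*m+1) * Real.sin (b k * x) = 0) := by
    intro m
    induction m with
    | zero =>
      constructor
      · intro x hx; simpa using hA x hx
      · intro x hx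
        -- derivative of the constant cos-sum
        have h063 : ∀ y ∈ Ioo (0:ℝ) ε, ∑ k, γ k * Real.cos (b k * y) = ∑ k, γ k := hA
        have hF : HasDerivAt (fun y => ∑ k, γ k * Real.cos (b k * y))
            (∑ k, -(γ k * b k) * Real.sin (b k * x)) x :=
          HasDerivAt.fun_sum (fun k _ => hderiv_cos (γ k) k x)
        have hc : HasDerivAt (fun y => ∑ k, γ k * Real.cos (b k * y)) 0 x := by
          have hev : (fun y => ∑ k, γ k * Real.cos (b k * y)) =ᶠ[nhds x]
              (fun _ => ∑ k, γ k) := by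
            filter_upwards [hopen.mem_nhds hx] with y hy using hA y hy
          exact (hasDerivAt_const x _).congr_of_eventuallyEq hev
        have := hF.unique hc
        calc ∑ k, γ k * (b k)^(2*0+1) * Real.sin (b k * x)
            = -∑ k, -(γ k * b k) * Real.sin (b k * x) := by
              rw [← Finset.sum_neg_distrib]; congr 1; ext k; ring
          _ = 0 := by rw [this]; ring
    | succ n ih =>
      have hsin := ih.2
      have hcos' : ∀ x ∈ Ioo (0:ℝ) ε,
          ∑ k, γ k * (b k) ^ (2*(n+1)) * Real.cos (b k * x) = 0 := by
        intro x hx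
        have hF : HasDerivAt (fun y => ∑ k, γ k * (b k)^(2*n+1) * Real.sin (b k * y))
            (∑ k, (γ k * (b k)^(2*n+1) * b k) * Real.cos (b k * x)) x :=
          HasDerivAt.fun_sum (fun k _ => hderiv_sin (γ k * (b k)^(2*n+1)) k x)
        have hc : HasDerivAt (fun y => ∑ k, γ k * (b k)^(2*n+1) * Real.sin (b k * y)) 0 x := by
          have hev : (fun y => ∑ k, γ k * (b k)^(2*n+1) * Real.sin (b k * y)) =ᶠ[nhds x]
              (fun _ => 0) := by
            filter_upwards [hopen.mem_nhds hx] with y hy using hsin y hy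
          exact (hasDerivAt_const x _).congr_of_eventuallyEq hev
        have h0 := hF.unique hc
        calc ∑ k, γ k * (b k)^(2*(n+1)) * Real.cos (b k * x)
            = ∑ k, (γ k * (b k)^(2*n+1) * b k) * Real.cos (b k * x) := by
              congr 1; ext k; ring
          _ = 0 := h0
      refine ⟨fun x hx => by simpa using hcos' x hx, ?_⟩
      intro x hx
      have hF : HasDerivAt (fun y => ∑ k, γ k * (b k)^(2*(n+1)) * Real.cos (b k * y))
          (∑ k, -(γ k * (b k)^(2*(n+1)) * b k) * Real.sin (b k * x)) x :=
        HasDerivAt.fun_sum (fun k _ => hderiv_cos (γ k * (b k)^(2*(n+1))) k x)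
      have hc : HasDerivAt (fun y => ∑ k, γ k * (b k)^(2*(n+1)) * Real.cos (b k * y)) 0 x := by
        have hev : (fun y => ∑ k, γ k * (b k)^(2*(n+1)) * Real.cos (b k * y)) =ᶠ[nhds x]
            (fun _ => 0) := by
          filter_upwards [hopen.mem_nhds hx] with y hy using hcos' y hy
        exact (hasDerivAt_const x _).congr_of_eventuallyEq hev
      have h0 := hF.unique hc
      calc ∑ k, γ k * (b k)^(2*(n+1)+1) * Real.sin (b k * x)
          = -∑ k, -(γ k * (b k)^(2*(n+1)) * b k) * Real.sin (b k * x) := by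
            rw [← Finset.sum_neg_distrib]; congr 1; ext k; ring
        _ = 0 := by rw [h0]; ring
  -- Step C: evaluate at x₀ = ε/2
  set x₀ : ℝ := ε / 2 with hx₀
  have hx₀mem : x₀ ∈ Ioo (0:ℝ) ε := ⟨by positivity, by linarith⟩
  set c : Fin N → ℝ := fun k => (b k)^2 with hc
  have hc_inj : Function.Injective c := by
    intro i j hij
    have hbi : 0 < b i := by simp [hb]; linarith [ha_pos i]
    have hbj : 0 < b j := by simp [hb]; linarith [ha_pos j]
    simp only [hc] at hij
    have : b i = b j := by nlinarith [hij, hbi, hbj]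
    apply ha_inj
    have := this
    simp only [hb] at this
    linarith
  have hCcos : ∀ m : ℕ, ∑ k, (γ k * Real.cos (b k * x₀)) * (c k) ^ (m+1) = 0 := by
    intro m
    have := (hB (m+1)).1 x₀ hx₀mem
    simp only [Nat.succ_ne_zero, if_false] at this
    calc ∑ k, (γ k * Real.cos (b k * x₀)) * (c k) ^ (m+1)
        = ∑ k, γ k * (b k)^(2*(m+1)) * Real.cos (b k * x₀) := by
          congr 1; ext k; simp only [hc]; rw [← pow_mul]; ring_nf
      _ = 0 := this
  have hCsin : ∀ m : ℕ, ∑ k, (γ k * b k * Real.sin (b k * x₀)) * (c k) ^ (m+1) = 0 := by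
    intro m
    have := (hB (m+1)).2 x₀ hx₀mem
    calc ∑ k, (γ k * b k * Real.sin (b k * x₀)) * (c k) ^ (m+1)
        = ∑ k, γ k * (b k)^(2*(m+1)+1) * Real.sin (b k * x₀) := by
          congr 1; ext k; simp only [hc]; rw [← pow_mul]; ring
      _ = 0 := this
  intro j
  have hcj : 0 < c j := by
    have : 0 < b j := by simp [hb]; linarith [ha_pos j]
    positivity
  have h1 := vand c (fun k => γ k * Real.cos (b k * x₀)) hc_inj hCcos j
  have h2 := vand c (fun k => γ k * b k * Real.sin (b k * x₀)) hc_inj hCsin j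
  have hbj : 0 < b j := by simp [hb]; linarith [ha_pos j]
  have hcos0 : γ j * Real.cos (b j * x₀) = 0 := by
    rcases mul_eq_zero.mp h1 with h | h
    · exact h
    · exact absurd h (ne_of_gt hcj)
  have hsin0 : γ j * Real.sin (b j * x₀) = 0 := by
    rcases mul_eq_zero.mp h2 with h | h
    · have := mul_eq_zero.mp h
      rcases this with h' | h'
      · rcases mul_eq_zero.mp h' with h'' | h''
        · simp [h'']
        · exact absurd h'' (ne_of_gt hbj)
      · simp [h']
    · exact absurd h (ne_of_gt hcj)
  have t := b j * x₀
  have h3 : γ j * (Real.sin (b j * x₀) ^ 2 + Real.cos (b j * x₀) ^ 2)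
      = Real.sin (b j * x₀) * (γ j * Real.sin (b j * x₀))
        + Real.cos (b j * x₀) * (γ j * Real.cos (b j * x₀)) := by ring
  rw [Real.sin_sq_add_cos_sq, hcos0, hsin0] at h3
  simpa using h3
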